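/- The extremal gadget X admits a 3-gel. Moreover, for every positive integer c and every good edge-labeling λ : E(X) → {1, …, c} of X, the label of the bone e = u_1 u_2 satisfies 1 < λ(e) < c. -/

import Mathlib

/-- A walk is *increasing* with respect to an edge-labeling if the sequence of labels of its
edges, traversed from the first endpoint to the last, is non-decreasing. -/
def IsIncreasing {V : Type*} (G : SimpleGraph V) (lab : Sym2 V → ℝ) {x y : V}
    (p : G.Walk x y) : Prop :=
  (p.edges.map lab).Chain' (· ≤ ·)

/-- An edge-labeling is *good* if for every ordered pair `(x, y)` of vertices there do not
exist two distinct increasing paths from `x` to `y`. -/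
def IsGoodLabeling {V : Type*} (G : SimpleGraph V) (lab : Sym2 V → ℝ) : Prop :=
  ∀ (x y : V) (p q : G.Walk x y), p.IsPath → q.IsPath →
    IsIncreasing G lab p → IsIncreasing G lab q → p = q

/-- The extremal gadget `X`, with vertices `0 = a`, `1 = u₁`, `2 = u₂`, `3 = m₁`, `4 = m₁'`,
`5 = m₂`, `6 = m₂'`: the bone `u₁u₂` together with, for each `i ∈ {1,2}`, two internally
disjoint paths of length two from `a` to `uᵢ`. -/
def ExtGadget : SimpleGraph (Fin 7) :=
  SimpleGraph.fromEdgeSet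
    {s(1, 2), s(0, 3), s(3, 1), s(0, 4), s(4, 1), s(0, 5), s(5, 2), s(0, 6), s(6, 2)}

instance : DecidableRel ExtGadget.Adj := fun a b =>
  decidable_of_iff ((s(a,b) = s(1,2) ∨ s(a,b) = s(0,3) ∨ s(a,b) = s(3,1) ∨ s(a,b) = s(0,4) ∨
    s(a,b) = s(4,1) ∨ s(a,b) = s(0,5) ∨ s(a,b) = s(5,2) ∨ s(a,b) = s(0,6) ∨ s(a,b) = s(6,2)) ∧ a ≠ b)
    (by simp [ExtGadget, SimpleGraph.fromEdgeSet_adj, Set.mem_insert_iff, Set.mem_singleton_iff])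

/-! ### Generic helpers -/

lemma walk_eq_of_support_eq {V : Type*} {G : SimpleGraph V} :
    ∀ {x y : V} (p q : G.Walk x y), p.support = q.support → p = q := by
  intro x y p
  induction p with
  | nil =>
    intro q h
    cases q with
    | nil => rfl
    | cons h' q' =>
      exfalso
      have := congrArg List.length h
      simp [SimpleGraph.Walk.length_support] at this
  | cons hadj p' ih =>
    intro q h
    cases q with
    | nil =>
      exfalso
      have := congrArg List.length h
      simp [SimpleGraph.Walk.length_support] at this
    | cons hadj' q' =>
      rw [SimpleGraph.Walk.support_cons, SimpleGraph.Walk.support_cons] at h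
      have htail : p'.support = q'.support := by injection h
      have hv := htail
      rw [p'.support_eq_cons, q'.support_eq_cons] at hv
      injection hv with hv1 hv2
      subst hv1
      rw [ih q' htail]

lemma two_path_absurd {lab : Sym2 (Fin 7) → ℝ} (good : IsGoodLabeling ExtGadget lab)
    {x y : Fin 7} (p q : ExtGadget.Walk x y) (hp : p.support.Nodup) (hq : q.support.Nodup)
    (hip : IsIncreasing ExtGadget lab p) (hiq : IsIncreasing ExtGadget lab q)
    (hne : p.support ≠ q.support) : False := by
  have := good x y p q (by rw [SimpleGraph.Walk.isPath_def]; exact hp)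
    (by rw [SimpleGraph.Walk.isPath_def]; exact hq) hip hiq
  exact hne (by rw [this])

/-- length-2 walk -/
def W2 (a b c : Fin 7) (h1 : ExtGadget.Adj a b) (h2 : ExtGadget.Adj b c) :
    ExtGadget.Walk a c := .cons h1 (.cons h2 .nil)

/-- length-3 walk -/
def W3 (a b c d : Fin 7) (h1 : ExtGadget.Adj a b) (h2 : ExtGadget.Adj b c)
    (h3 : ExtGadget.Adj c d) : ExtGadget.Walk a d := .cons h1 (.cons h2 (.cons h3 .nil))

lemma W2_support {a b c : Fin 7} {h1 : ExtGadget.Adj a b} {h2 : ExtGadget.Adj b c} :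
    (W2 a b c h1 h2).support = [a, b, c] := rfl

lemma W3_support {a b c d : Fin 7} {h1 : ExtGadget.Adj a b} {h2 : ExtGadget.Adj b c}
    {h3 : ExtGadget.Adj c d} : (W3 a b c d h1 h2 h3).support = [a, b, c, d] := rfl

lemma incW2 {lab : Sym2 (Fin 7) → ℝ} {a b c : Fin 7} {h1 : ExtGadget.Adj a b}
    {h2 : ExtGadget.Adj b c} (h : lab s(a,b) ≤ lab s(b,c)) :
    IsIncreasing ExtGadget lab (W2 a b c h1 h2) := by
  simpa [IsIncreasing, W2, List.Chain', List.isChain_cons_cons, List.isChain_singleton] using h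

lemma incW3 {lab : Sym2 (Fin 7) → ℝ} {a b c d : Fin 7} {h1 : ExtGadget.Adj a b}
    {h2 : ExtGadget.Adj b c} {h3 : ExtGadget.Adj c d}
    (h : lab s(a,b) ≤ lab s(b,c)) (h' : lab s(b,c) ≤ lab s(c,d)) :
    IsIncreasing ExtGadget lab (W3 a b c d h1 h2 h3) := by
  simp only [IsIncreasing, W3, SimpleGraph.Walk.edges_cons, SimpleGraph.Walk.edges_nil,
    List.map_cons, List.map_nil, List.Chain', List.isChain_cons_cons, List.isChain_singleton]
  exact ⟨h, h', trivial⟩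

lemma sw (lab : Sym2 (Fin 7) → ℝ) (a b : Fin 7) : lab s(a,b) = lab s(b,a) := by
  rw [Sym2.eq_swap]

/-! ### Part 1: an explicit 3-gel, via finite enumeration -/

def nbrs : Fin 7 → List (Fin 7) := fun v =>
  if v = 0 then [3,4,5,6] else if v = 1 then [2,3,4] else if v = 2 then [1,5,6]
  else if v = 3 then [0,1] else if v = 4 then [0,1] else if v = 5 then [0,2] else [0,2]

lemma adj_mem_nbrs : ∀ {a b : Fin 7}, ExtGadget.Adj a b → b ∈ nbrs a := by decide

def pathsFrom : ℕ → Fin 7 → List (List (Fin 7))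
  | 0, x => [[x]]
  | n+1, x => [x] :: (nbrs x).flatMap (fun y => (pathsFrom n y).map (x :: ·))

lemma support_mem_pathsFrom {x y : Fin 7} (p : ExtGadget.Walk x y) :
    ∀ n, p.length ≤ n → p.support ∈ pathsFrom n x := by
  induction p with
  | nil =>
    intro n _
    cases n with
    | zero => simp [pathsFrom]
    | succ n => simp [pathsFrom]
  | cons hadj p' ih =>
    intro n hn
    cases n with
    | zero => simp at hn
    | succ n =>
      simp only [SimpleGraph.Walk.length_cons, Nat.succ_le_succ_iff] at hn
      simp only [pathsFrom, List.mem_cons, List.mem_flatMap, List.mem_map]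
      exact Or.inr ⟨_, adj_mem_nbrs hadj, p'.support, ih n hn, by
        rw [SimpleGraph.Walk.support_cons]⟩

/-- the concrete 3-valued labeling (natural-number valued) -/
def Gnat : Sym2 (Fin 7) → ℕ := fun e =>
  if e = s(1,2) then 2
  else if e = s(0,3) ∨ e = s(0,5) ∨ e = s(1,4) ∨ e = s(2,6) then 1
  else 3

def labList : List (Fin 7) → List ℕ
  | a :: b :: t => Gnat s(a,b) :: labList (b :: t)
  | _ => []

def sortedB : List ℕ → Bool
  | a :: b :: t => (a ≤ b : Bool) && sortedB (b :: t)
  | _ => true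

lemma sortedB_iff : ∀ l : List ℕ, sortedB l = true ↔ l.Chain' (· ≤ ·)
  | [] => by simp [sortedB, List.Chain']
  | [a] => by simp [sortedB, List.Chain']
  | a :: b :: t => by
    have := sortedB_iff (b :: t); simp only [List.Chain'] at this ⊢
    rw [List.isChain_cons_cons, ← this]
    simp [sortedB, Bool.and_eq_true, decide_eq_true_iff]

lemma edges_map_eq_labList {x y : Fin 7} (p : ExtGadget.Walk x y) :
    p.edges.map Gnat = labList p.support := by
  induction p with
  | nil => rfl
  | cons hadj p' ih =>
    rw [SimpleGraph.Walk.edges_cons, SimpleGraph.Walk.support_cons, List.map_cons, ih,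
      p'.support_eq_cons]
    rfl

def goodFilter (x : Fin 7) : List (List (Fin 7)) :=
  (pathsFrom 6 x).filter (fun l => decide l.Nodup && sortedB (labList l))

set_option maxRecDepth 100000 in
set_option maxHeartbeats 4000000 in
lemma enum_good : ∀ x : Fin 7, ∀ l1 ∈ goodFilter x, ∀ l2 ∈ goodFilter x,
    l1.getLast? = l2.getLast? → l1 = l2 := by decide

lemma good_Gnat : IsGoodLabeling ExtGadget (fun e => (Gnat e : ℝ)) := by
  intro x y p q hp hq hip hiq
  have key : ∀ r : ExtGadget.Walk x y, r.IsPath →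
      IsIncreasing ExtGadget (fun e => (Gnat e : ℝ)) r → r.support ∈ goodFilter x := by
    intro r hr hir
    have hlen : r.length ≤ 6 := Nat.lt_succ_iff.mp (by simpa using hr.length_lt)
    have hmem := support_mem_pathsFrom r 6 hlen
    have hchain : (labList r.support).Chain' (· ≤ ·) := by
      rw [← edges_map_eq_labList]
      have h1 : (r.edges.map fun e => ((Gnat e : ℕ) : ℝ)).Chain' (· ≤ ·) := hir
      simp only [List.Chain', List.isChain_map] at h1
      simp only [List.Chain', List.isChain_map]
      exact h1.imp (fun a b h => by exact_mod_cast h)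
    rw [goodFilter, List.mem_filter]
    refine ⟨hmem, ?_⟩
    rw [Bool.and_eq_true, decide_eq_true_iff, sortedB_iff]
    exact ⟨hr.support_nodup, hchain⟩
  have h1 := key p hp hip
  have h2 := key q hq hiq
  apply walk_eq_of_support_eq
  apply enum_good x p.support h1 q.support h2
  rw [List.getLast?_eq_getLast p.support_ne_nil, List.getLast?_eq_getLast q.support_ne_nil,
    SimpleGraph.Walk.getLast_support, SimpleGraph.Walk.getLast_support]

lemma part1 : ∃ lab : Sym2 (Fin 7) → ℝ,
    IsGoodLabeling ExtGadget lab ∧ (lab '' ExtGadget.edgeSet).ncard ≤ 3 := by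
  refine ⟨fun e => (Gnat e : ℝ), good_Gnat, ?_⟩
  have hsub : (fun e => (Gnat e : ℝ)) '' ExtGadget.edgeSet ⊆ {(1:ℝ), 2, 3} := by
    rintro - ⟨e, -, rfl⟩
    simp only [Gnat]
    split_ifs <;> simp
  have h3 : ({(1:ℝ), 2, 3} : Set ℝ).ncard = 3 := by
    rw [Set.ncard_insert_of_notMem (by norm_num) (Set.toFinite _),
      Set.ncard_insert_of_notMem (by norm_num) (Set.toFinite _), Set.ncard_singleton]
  have := Set.ncard_le_ncard hsub (Set.toFinite _)
  omega

/-! ### Part 2 -/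

section Part2

variable {lab : Sym2 (Fin 7) → ℝ} (good : IsGoodLabeling ExtGadget lab)

include good

lemma min_side1 (h3 : lab s(0,3) < lab s(3,1)) (h4 : lab s(0,4) < lab s(4,1)) : False :=
  two_path_absurd good (W2 0 3 1 (by decide) (by decide)) (W2 0 4 1 (by decide) (by decide))
    (by decide) (by decide) (incW2 h3.le) (incW2 h4.le) (by decide)

lemma min_side2 (h5 : lab s(0,5) < lab s(5,2)) (h6 : lab s(0,6) < lab s(6,2)) : False :=
  two_path_absurd good (W2 0 5 2 (by decide) (by decide)) (W2 0 6 2 (by decide) (by decide))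
    (by decide) (by decide) (incW2 h5.le) (incW2 h6.le) (by decide)

lemma max_side1 (h3 : lab s(3,1) < lab s(0,3)) (h4 : lab s(4,1) < lab s(0,4)) : False :=
  two_path_absurd good (W2 1 3 0 (by decide) (by decide)) (W2 1 4 0 (by decide) (by decide))
    (by decide) (by decide)
    (incW2 (by rw [sw lab 1 3, sw lab 3 0]; exact h3.le))
    (incW2 (by rw [sw lab 1 4, sw lab 4 0]; exact h4.le)) (by decide)

lemma max_side2 (h5 : lab s(5,2) < lab s(0,5)) (h6 : lab s(6,2) < lab s(0,6)) : False :=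
  two_path_absurd good (W2 2 5 0 (by decide) (by decide)) (W2 2 6 0 (by decide) (by decide))
    (by decide) (by decide)
    (incW2 (by rw [sw lab 2 5, sw lab 5 0]; exact h5.le))
    (incW2 (by rw [sw lab 2 6, sw lab 6 0]; exact h6.le)) (by decide)

lemma min_contra (m m' : Fin 7)
    (a1 : ExtGadget.Adj 2 m') (a2 : ExtGadget.Adj 1 m) (a3 : ExtGadget.Adj m 0)
    (a4 : ExtGadget.Adj 0 m') (a5 : ExtGadget.Adj 2 m') (a6 : ExtGadget.Adj m' 0)
    (a7 : ExtGadget.Adj 0 m) (a8 : ExtGadget.Adj 1 m)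
    (nd1 : ([1, 2, m'] : List (Fin 7)).Nodup) (nd2 : ([1, m, 0, m'] : List (Fin 7)).Nodup)
    (nd3 : ([2, 1, m] : List (Fin 7)).Nodup) (nd4 : ([2, m', 0, m] : List (Fin 7)).Nodup)
    (ne1 : ([1, 2, m'] : List (Fin 7)) ≠ [1, m, 0, m'])
    (ne2 : ([2, 1, m] : List (Fin 7)) ≠ [2, m', 0, m])
    (h1 : lab s(m,1) ≤ lab s(0,m)) (h2 : lab s(m',2) ≤ lab s(0,m'))
    (hminA : lab s(1,2) ≤ lab s(m',2)) (hminB : lab s(1,2) ≤ lab s(m,1)) : False := by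
  rcases le_total (lab s(0,m)) (lab s(0,m')) with hle | hle
  · exact two_path_absurd good (W2 1 2 m' (by decide) a1) (W3 1 m 0 m' a2 a3 a4)
      (by rw [W2_support]; exact nd1) (by rw [W3_support]; exact nd2)
      (incW2 (by rw [sw lab 2 m']; exact hminA))
      (incW3 (by rw [sw lab 1 m, sw lab m 0]; exact h1) (by rw [sw lab m 0]; exact hle))
      (by rw [W2_support, W3_support]; exact ne1)
  · exact two_path_absurd good (W2 2 1 m (by decide) a8) (W3 2 m' 0 m a5 a6 a7)
      (by rw [W2_support]; exact nd3) (by rw [W3_support]; exact nd4)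
      (incW2 (by rw [sw lab 2 1, sw lab 1 m]; exact hminB))
      (incW3 (by rw [sw lab 2 m', sw lab m' 0]; exact h2) (by rw [sw lab m' 0]; exact hle))
      (by rw [W2_support, W3_support]; exact ne2)

lemma max_contra (m m' : Fin 7)
    (a1 : ExtGadget.Adj m 1) (a2 : ExtGadget.Adj m 0) (a3 : ExtGadget.Adj 0 m')
    (a4 : ExtGadget.Adj m' 2) (a5 : ExtGadget.Adj m' 0) (a6 : ExtGadget.Adj 0 m)
    (nd1 : ([m, 1, 2] : List (Fin 7)).Nodup) (nd2 : ([m, 0, m', 2] : List (Fin 7)).Nodup)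
    (nd3 : ([m', 2, 1] : List (Fin 7)).Nodup) (nd4 : ([m', 0, m, 1] : List (Fin 7)).Nodup)
    (ne1 : ([m, 1, 2] : List (Fin 7)) ≠ [m, 0, m', 2])
    (ne2 : ([m', 2, 1] : List (Fin 7)) ≠ [m', 0, m, 1])
    (h1 : lab s(0,m) ≤ lab s(m,1)) (h2 : lab s(0,m') ≤ lab s(m',2))
    (hmaxA : lab s(m,1) ≤ lab s(1,2)) (hmaxB : lab s(m',2) ≤ lab s(1,2)) : False := by
  rcases le_total (lab s(0,m)) (lab s(0,m')) with hle | hle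
  · exact two_path_absurd good (W2 m 1 2 a1 (by decide)) (W3 m 0 m' 2 a2 a3 a4)
      (by rw [W2_support]; exact nd1) (by rw [W3_support]; exact nd2)
      (incW2 hmaxA)
      (incW3 (by rw [sw lab m 0]; exact hle) h2)
      (by rw [W2_support, W3_support]; exact ne1)
  · exact two_path_absurd good (W2 m' 2 1 a4 (by decide)) (W3 m' 0 m 1 a5 a6 a1)
      (by rw [W2_support]; exact nd3) (by rw [W3_support]; exact nd4)
      (incW2 (by rw [sw lab 2 1]; exact hmaxB))
      (incW3 (by rw [sw lab m' 0]; exact hle) h1)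
      (by rw [W2_support, W3_support]; exact ne2)

end Part2

theorem extremal_gadget :
    (∃ lab : Sym2 (Fin 7) → ℝ,
      IsGoodLabeling ExtGadget lab ∧ (lab '' ExtGadget.edgeSet).ncard ≤ 3) ∧
    ∀ c : ℕ, 0 < c → ∀ lab : Sym2 (Fin 7) → ℝ,
      (∀ e ∈ ExtGadget.edgeSet, ∃ k : ℕ, 1 ≤ k ∧ k ≤ c ∧ lab e = (k : ℝ)) →
      IsGoodLabeling ExtGadget lab →
      1 < lab s(1, 2) ∧ lab s(1, 2) < (c : ℝ) := by
  constructor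
  · exact part1
  · intro c hc lab hval good
    have hbound : ∀ a b : Fin 7, ExtGadget.Adj a b → (1:ℝ) ≤ lab s(a,b) ∧ lab s(a,b) ≤ (c:ℝ) := by
      intro a b h
      obtain ⟨k, hk1, hkc, hke⟩ := hval _ ((SimpleGraph.mem_edgeSet ExtGadget).2 h)
      rw [hke]
      exact ⟨by exact_mod_cast hk1, by exact_mod_cast hkc⟩
    constructor
    · by_contra hlt
      push_neg at hlt
      have h12 : lab s(1,2) = 1 := le_antisymm hlt (hbound 1 2 (by decide)).1
      have hmin : ∀ a b : Fin 7, ExtGadget.Adj a b → lab s(1,2) ≤ lab s(a,b) := by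
        intro a b h; rw [h12]; exact (hbound a b h).1
      rcases le_or_gt (lab s(3,1)) (lab s(0,3)) with h3 | h3
      · rcases le_or_gt (lab s(5,2)) (lab s(0,5)) with h5 | h5
        · exact min_contra good 3 5 (by decide) (by decide) (by decide) (by decide) (by decide)
            (by decide) (by decide) (by decide) (by decide) (by decide) (by decide) (by decide)
            (by decide) (by decide) h3 h5 (hmin 5 2 (by decide)) (hmin 3 1 (by decide))
        · rcases le_or_gt (lab s(6,2)) (lab s(0,6)) with h6 | h6
          · exact min_contra good 3 6 (by decide) (by decide) (by decide) (by decide) (by decide)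
              (by decide) (by decide) (by decide) (by decide) (by decide) (by decide) (by decide)
              (by decide) (by decide) h3 h6 (hmin 6 2 (by decide)) (hmin 3 1 (by decide))
          · exact min_side2 good h5 h6
      · rcases le_or_gt (lab s(4,1)) (lab s(0,4)) with h4 | h4
        · rcases le_or_gt (lab s(5,2)) (lab s(0,5)) with h5 | h5
          · exact min_contra good 4 5 (by decide) (by decide) (by decide) (by decide) (by decide)
              (by decide) (by decide) (by decide) (by decide) (by decide) (by decide) (by decide)
              (by decide) (by decide) h4 h5 (hmin 5 2 (by decide)) (hmin 4 1 (by decide))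
          · rcases le_or_gt (lab s(6,2)) (lab s(0,6)) with h6 | h6
            · exact min_contra good 4 6 (by decide) (by decide) (by decide) (by decide) (by decide)
                (by decide) (by decide) (by decide) (by decide) (by decide) (by decide) (by decide)
                (by decide) (by decide) h4 h6 (hmin 6 2 (by decide)) (hmin 4 1 (by decide))
            · exact min_side2 good h5 h6
        · exact min_side1 good h3 h4
    · by_contra hlt
      push_neg at hlt
      have h12 : lab s(1,2) = c := le_antisymm (hbound 1 2 (by decide)).2 hlt
      have hmax : ∀ a b : Fin 7, ExtGadget.Adj a b → lab s(a,b) ≤ lab s(1,2) := by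
        intro a b h; rw [h12]; exact (hbound a b h).2
      rcases le_or_gt (lab s(0,3)) (lab s(3,1)) with h3 | h3
      · rcases le_or_gt (lab s(0,5)) (lab s(5,2)) with h5 | h5
        · exact max_contra good 3 5 (by decide) (by decide) (by decide) (by decide) (by decide)
            (by decide) (by decide) (by decide) (by decide) (by decide) (by decide) (by decide)
            h3 h5 (hmax 3 1 (by decide)) (hmax 5 2 (by decide))
        · rcases le_or_gt (lab s(0,6)) (lab s(6,2)) with h6 | h6
          · exact max_contra good 3 6 (by decide) (by decide) (by decide) (by decide) (by decide)
              (by decide) (by decide) (by decide) (by decide) (by decide) (by decide) (by decide)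
              h3 h6 (hmax 3 1 (by decide)) (hmax 6 2 (by decide))
          · exact max_side2 good h5 h6
      · rcases le_or_gt (lab s(0,4)) (lab s(4,1)) with h4 | h4
        · rcases le_or_gt (lab s(0,5)) (lab s(5,2)) with h5 | h5
          · exact max_contra good 4 5 (by decide) (by decide) (by decide) (by decide) (by decide)
              (by decide) (by decide) (by decide) (by decide) (by decide) (by decide) (by decide)
              h4 h5 (hmax 4 1 (by decide)) (hmax 5 2 (by decide))
          · rcases le_or_gt (lab s(0,6)) (lab s(6,2)) with h6 | h6
            · exact max_contra good 4 6 (by decide) (by decide) (by decide) (by decide) (by decide)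
                (by decide) (by decide) (by decide) (by decide) (by decide) (by decide) (by decide)
                h4 h6 (hmax 4 1 (by decide)) (hmax 6 2 (by decide))
            · exact max_side2 good h5 h6
        · exact max_side1 good h3 h4
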